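/- Let ν > 0, b ≠ 0, C₁, C₂ be real numbers and set a = n = (ν + 3)/(ν + 1). Define g(η) = (b²(η + C₂)² − C₁)/(b(ν + 1)) and φ(η) = g(η)^(−(ν+1)/2) (real power). Then at every η with g(η) > 0, φ satisfies φ·φ'' − a(φ')² + b·φ^(n+1) = 0, where all powers are real powers of positive reals. -/

import Mathlib

/-- `φ = g^(−(ν+1)/2)` with `g = (b²(η+C₂)² − C₁)/(b(ν+1))` solves the
case `a = n = (ν+3)/(ν+1)` wherever `g > 0`. -/
theorem stmt_10 (ν b C₁ C₂ : ℝ) (hν : 0 < ν) (hb : b ≠ 0)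
    (a n : ℝ) (ha : a = (ν + 3) / (ν + 1)) (hn : n = (ν + 3) / (ν + 1)) :
    ∀ η : ℝ, (b ^ 2 * (η + C₂) ^ 2 - C₁) / (b * (ν + 1)) > 0 →
      (fun η => ((b ^ 2 * (η + C₂) ^ 2 - C₁) / (b * (ν + 1))) ^ (-(ν + 1) / 2)) η
          * deriv (deriv (fun η =>
              ((b ^ 2 * (η + C₂) ^ 2 - C₁) / (b * (ν + 1))) ^ (-(ν + 1) / 2))) η
        - a * (deriv (fun η =>
              ((b ^ 2 * (η + C₂) ^ 2 - C₁) / (b * (ν + 1))) ^ (-(ν + 1) / 2)) η) ^ 2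
        + b * ((fun η =>
              ((b ^ 2 * (η + C₂) ^ 2 - C₁) / (b * (ν + 1))) ^ (-(ν + 1) / 2)) η)
            ^ (n + 1) = 0 := by
  intro η₀ hg0
  set p : ℝ := -(ν + 1) / 2 with hpdef
  set g : ℝ → ℝ := fun η => (b ^ 2 * (η + C₂) ^ 2 - C₁) / (b * (ν + 1)) with hgdef
  have hFg : (fun η => ((b ^ 2 * (η + C₂) ^ 2 - C₁) / (b * (ν + 1))) ^ p)
      = fun η => g η ^ p := rfl
  rw [hFg]
  have hν1 : ν + 1 ≠ 0 := by positivity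
  -- derivative of g
  have hg' : ∀ η : ℝ, HasDerivAt g (2 * b * (η + C₂) / (ν + 1)) η := by
    intro η
    have h1 : HasDerivAt (fun η : ℝ => η + C₂) 1 η := (hasDerivAt_id η).add_const _
    have h2 := (((h1.pow 2).const_mul (b ^ 2)).sub_const C₁).div_const (b * (ν + 1))
    convert h2 using 1
    all_goals first | rfl | (try field_simp); ring
  -- first derivative of φ where g ≠ 0
  have hφ' : ∀ η : ℝ, g η ≠ 0 →
      HasDerivAt (fun η => g η ^ p)
        ((2 * b * (η + C₂) / (ν + 1)) * p * g η ^ (p - 1)) η := by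
    intro η hη
    exact (hg' η).rpow_const (Or.inl hη)
  have hgη₀ : g η₀ ≠ 0 := ne_of_gt hg0
  have hgc : Continuous g := by
    apply Continuous.div_const
    exact (continuous_const.mul ((continuous_id.add continuous_const).pow 2)).sub continuous_const
  have hnhds : ∀ᶠ η in nhds η₀, g η ≠ 0 := hgc.continuousAt.eventually_ne hgη₀
  have hderiv1 : deriv (fun η => g η ^ p) =ᶠ[nhds η₀]
      fun η => (2 * b * (η + C₂) / (ν + 1)) * p * g η ^ (p - 1) := by
    filter_upwards [hnhds] with η hη
    exact (hφ' η hη).deriv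
  have hD2 : HasDerivAt (fun η => (2 * b * (η + C₂) / (ν + 1)) * p * g η ^ (p - 1))
      ((2 * b / (ν + 1)) * p * g η₀ ^ (p - 1)
        + (2 * b * (η₀ + C₂) / (ν + 1)) * p
          * ((2 * b * (η₀ + C₂) / (ν + 1)) * (p - 1) * g η₀ ^ (p - 1 - 1))) η₀ := by
    have h1 : HasDerivAt (fun η : ℝ => η + C₂) 1 η₀ := (hasDerivAt_id η₀).add_const _
    have hlin : HasDerivAt (fun η : ℝ => 2 * b * (η + C₂) / (ν + 1) * p)
        ((2 * b / (ν + 1)) * p) η₀ := by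
      have := ((h1.const_mul (2 * b)).div_const (ν + 1)).mul_const p
      convert this using 1
      all_goals first | ring | rfl
    have hpow : HasDerivAt (fun η => g η ^ (p - 1))
        ((2 * b * (η₀ + C₂) / (ν + 1)) * (p - 1) * g η₀ ^ (p - 1 - 1)) η₀ :=
      (hg' η₀).rpow_const (Or.inl hgη₀)
    have := hlin.mul hpow
    convert this using 1
    all_goals first | rfl | ring
  have hd2 : deriv (deriv (fun η => g η ^ p)) η₀
      = (2 * b / (ν + 1)) * p * g η₀ ^ (p - 1)
        + (2 * b * (η₀ + C₂) / (ν + 1)) * p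
          * ((2 * b * (η₀ + C₂) / (ν + 1)) * (p - 1) * g η₀ ^ (p - 1 - 1)) := by
    rw [hderiv1.deriv_eq]
    exact hD2.deriv
  have hd1 : deriv (fun η => g η ^ p) η₀
      = (2 * b * (η₀ + C₂) / (ν + 1)) * p * g η₀ ^ (p - 1) :=
    (hφ' η₀ hgη₀).deriv
  set G : ℝ := g η₀ with hG
  have hGpos : 0 < G := hg0
  have hGne : G ≠ 0 := ne_of_gt hGpos
  have e1 : G ^ (p - 1) = G ^ p / G := by
    rw [Real.rpow_sub hGpos, Real.rpow_one]
  have e2 : G ^ (p - 1 - 1) = G ^ p / G / G := by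
    rw [Real.rpow_sub hGpos, Real.rpow_sub hGpos, Real.rpow_one]
  have e3 : (G ^ p) ^ (n + 1) = G ^ p * G ^ p / G := by
    rw [← Real.rpow_mul hGpos.le]
    have hpn : p * (n + 1) = p + p - 1 := by
      rw [hn, hpdef]; field_simp; ring
    rw [hpn, Real.rpow_sub hGpos, Real.rpow_add hGpos, Real.rpow_one]
  beta_reduce; rw [← hG]; simp only [hd1, hd2, e1, e2, e3]
  rw [ha, hpdef]
  field_simp
  ring
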